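/- Let N be a lattice with dual N*, let w be a nonzero element of N, and let s₁,…,s_m ∈ N* \ ℚw form a eutactic star of scale s (that is, ∑ᵢ⟨v,sᵢ⟩² = s⟨v,v⟩ for all v). Then s·⟨w,w⟩ ≤ |{i : ⟨w,sᵢ⟩ ≠ 0}| · ⌈√(s⟨w,w⟩) − 1⌉². -/

import Mathlib

open scoped RealInnerProductSpace

/-- Let `w` be a nonzero element of a lattice `N` and `v 1, …, v m ∈ N* \ ℚw` form a
eutactic star of scale `s`. (Being in `N*` with `w ∈ N` is recorded by the integrality of
`⟪w, v i⟫` and of `⟪w, w⟫`.) Then `s⟪w,w⟫ ≤ #{i : ⟪w, v i⟫ ≠ 0} · ⌈√(s⟪w,w⟫) − 1⌉²`. -/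
theorem stmt_8 (n m s : ℕ) (hs : 0 < s)
    (w : EuclideanSpace ℝ (Fin n)) (hw : w ≠ 0)
    (hww : ∃ k : ℤ, ⟪w, w⟫ = (k : ℝ))
    (v : Fin m → EuclideanSpace ℝ (Fin n))
    (hint : ∀ i, ∃ k : ℤ, ⟪w, v i⟫ = (k : ℝ))
    (hnq : ∀ i, ∀ q : ℚ, v i ≠ (q : ℝ) • w)
    (heut : ∀ u : EuclideanSpace ℝ (Fin n), ∑ i, ⟪u, v i⟫ ^ 2 = s * ⟪u, u⟫) :
    (s : ℝ) * ⟪w, w⟫ ≤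
      ((Finset.univ.filter fun i => ⟪w, v i⟫ ≠ 0).card : ℝ) *
        ((⌈Real.sqrt ((s : ℝ) * ⟪w, w⟫) - 1⌉ : ℤ) : ℝ) ^ 2 := by
  obtain ⟨k, hk⟩ := hww
  have hwpos : (0 : ℝ) < ⟪w, w⟫ := by
    rw [real_inner_self_eq_norm_sq]
    have : ‖w‖ ≠ 0 := norm_ne_zero_iff.mpr hw
    positivity
  set T : ℝ := (s : ℝ) * ⟪w, w⟫ with hT
  have hTpos : 0 < T := by positivity
  set M : ℤ := ⌈Real.sqrt T - 1⌉ with hM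
  -- no v i is a real multiple of w
  have hnr : ∀ i, ∀ r : ℝ, v i ≠ r • w := by
    intro i r hvi
    obtain ⟨j, hj⟩ := hint i
    have hk0 : (k : ℝ) ≠ 0 := by rw [← hk]; exact ne_of_gt hwpos
    have hr : r = (j : ℝ) / (k : ℝ) := by
      have : ⟪w, v i⟫ = r * ⟪w, w⟫ := by rw [hvi, real_inner_smul_right]
      rw [hj, hk] at this
      field_simp [this]
      linarith
    refine hnq i ((j : ℚ) / (k : ℚ)) ?_
    rw [hvi, hr]
    push_cast
    rfl
  -- each nonzero inner product squared is < T
  have hlt : ∀ i, ⟪w, v i⟫ ≠ 0 → ⟪w, v i⟫ ^ 2 < T := by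
    intro i hi
    have hvi0 : v i ≠ 0 := by
      intro h; apply hi; rw [h, inner_zero_right]
    have hvpos : (0 : ℝ) < ⟪v i, v i⟫ := by
      rw [real_inner_self_eq_norm_sq]
      have : ‖v i‖ ≠ 0 := norm_ne_zero_iff.mpr hvi0
      positivity
    -- norm of v i squared ≤ s
    have hvs : ⟪v i, v i⟫ ≤ (s : ℝ) := by
      have h1 := heut (v i)
      have h2 : ⟪v i, v i⟫ ^ 2 ≤ ∑ j, ⟪v i, v j⟫ ^ 2 :=
        Finset.single_le_sum (f := fun j => ⟪v i, v j⟫ ^ 2)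
          (fun j _ => sq_nonneg _) (Finset.mem_univ i)
      rw [h1] at h2
      nlinarith
    -- strict Cauchy-Schwarz
    have hnw : ‖w‖ ≠ 0 := norm_ne_zero_iff.mpr hw
    have hcs : |⟪w, v i⟫| < ‖w‖ * ‖v i‖ := by
      rcases abs_cases ⟪w, v i⟫ with ⟨h, _⟩ | ⟨h, _⟩
      · rw [h]
        refine inner_lt_norm_mul_iff_real.mpr ?_
        intro hEq
        apply hnr i (‖w‖⁻¹ * ‖v i‖)
        calc v i = ‖w‖⁻¹ • (‖w‖ • v i) := by
              rw [smul_smul, inv_mul_cancel₀ hnw, one_smul]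
          _ = ‖w‖⁻¹ • (‖v i‖ • w) := by rw [hEq]
          _ = (‖w‖⁻¹ * ‖v i‖) • w := (mul_smul _ _ _).symm
      · have hni : -⟪w, v i⟫ = ⟪w, -(v i)⟫ := by rw [inner_neg_right]
        rw [h, hni, show ‖v i‖ = ‖-(v i)‖ from (norm_neg _).symm]
        refine inner_lt_norm_mul_iff_real.mpr ?_
        intro hEq
        apply hnr i (-(‖w‖⁻¹ * ‖-(v i)‖))
        have : -(v i) = ‖w‖⁻¹ • (‖-(v i)‖ • w) := by
          calc -(v i) = ‖w‖⁻¹ • (‖w‖ • -(v i)) := by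
                rw [smul_smul, inv_mul_cancel₀ hnw, one_smul]
            _ = ‖w‖⁻¹ • (‖-(v i)‖ • w) := by rw [hEq]
        rw [neg_smul, ← mul_smul] at *
        rw [← this, neg_neg]
    have : ⟪w, v i⟫ ^ 2 < (‖w‖ * ‖v i‖) ^ 2 := by
      have h0 : 0 ≤ |⟪w, v i⟫| := abs_nonneg _
      calc ⟪w, v i⟫ ^ 2 = |⟪w, v i⟫| ^ 2 := (sq_abs _).symm
        _ < (‖w‖ * ‖v i‖) ^ 2 := by nlinarith
    calc ⟪w, v i⟫ ^ 2 < (‖w‖ * ‖v i‖) ^ 2 := this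
      _ = ⟪w, w⟫ * ⟪v i, v i⟫ := by
          rw [mul_pow, ← real_inner_self_eq_norm_sq, ← real_inner_self_eq_norm_sq]
      _ ≤ ⟪w, w⟫ * (s : ℝ) := by nlinarith
      _ = T := by rw [hT, mul_comm]
  -- each nonzero inner product squared is ≤ M^2
  have hle : ∀ i, ⟪w, v i⟫ ≠ 0 → ⟪w, v i⟫ ^ 2 ≤ (M : ℝ) ^ 2 := by
    intro i hi
    obtain ⟨j, hj⟩ := hint i
    have hj0 : j ≠ 0 := by rintro rfl; exact hi (by simpa using hj)
    have hjlt : (j : ℝ) ^ 2 < T := by rw [← hj]; exact hlt i hi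
    have habs : (|j| : ℝ) < Real.sqrt T := by
      have := Real.sqrt_lt_sqrt (sq_nonneg (j : ℝ)) hjlt
      rw [Real.sqrt_sq_eq_abs] at this
      exact_mod_cast this
    have hjM : |j| ≤ M := by
      have h1 : Real.sqrt T - 1 ≤ (M : ℝ) := Int.le_ceil _
      have : (|j| : ℝ) < (M : ℝ) + 1 := by linarith
      exact_mod_cast Int.lt_add_one_iff.mp (by exact_mod_cast this)
    have : j ^ 2 ≤ M ^ 2 := by
      calc j ^ 2 = |j| ^ 2 := (sq_abs j).symm
        _ ≤ M ^ 2 := pow_le_pow_left₀ (abs_nonneg j) hjM 2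
    rw [hj]
    exact_mod_cast this
  have hsum : T = ∑ i ∈ Finset.univ.filter fun i => ⟪w, v i⟫ ≠ 0, ⟪w, v i⟫ ^ 2 := by
    rw [Finset.sum_filter_of_ne, heut w]
    intro i _ h hzero
    exact h (by rw [hzero]; ring)
  rw [hsum]
  calc ∑ i ∈ Finset.univ.filter fun i => ⟪w, v i⟫ ≠ 0, ⟪w, v i⟫ ^ 2
      ≤ (Finset.univ.filter fun i => ⟪w, v i⟫ ≠ 0).card • ((M : ℝ) ^ 2) := by
        refine Finset.sum_le_card_nsmul _ _ _ ?_
        intro i hi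
        exact hle i (Finset.mem_filter.mp hi).2
    _ = _ := by rw [nsmul_eq_mul]
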